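/- arXiv:1407.0475 — 6 statements merged into one kernel-verified Lean document; each statement's English description precedes it below -/
import Mathlib

section
/- Let A be a principal ideal domain and M a finitely generated torsion-free A-module. Then every nonzero pure submodule N of M contains a unimodular vector, i.e. a vector v ∈ N for which there exists an A-linear form θ : M → A with θ(v) = 1. -/
/-- Let `A` be a PID and `M` a finitely generated torsion-free
`A`-module. Then every nonzero pure submodule `N` of `M` contains a unimodular
vector, i.e. some `v ∈ N` with `θ v = 1` for an `A`-linear form `θ : M → A`. -/
theorem exists_unimodular_of_pure_pid {A M : Type*} [CommRing A] [IsDomain A]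
    [IsPrincipalIdealRing A] [AddCommGroup M] [Module A M]
    [Module.Finite A M] [NoZeroSMulDivisors A M]
    (N : Submodule A M) (hpure : NoZeroSMulDivisors A (M ⧸ N)) (hN : N ≠ ⊥) :
    ∃ v ∈ N, ∃ θ : M →ₗ[A] A, θ v = 1 := by
  haveI : IsNoetherian A M := isNoetherian_of_isNoetherianRing_of_finite A M
  -- M/N is finite torsion-free, hence free, hence projective, so mkQ splits
  haveI : Module.Finite A (M ⧸ N) := Module.Finite.quotient A N
  haveI : Module.Free A (M ⧸ N) := Module.free_of_finite_type_torsion_free'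
  obtain ⟨s, hs⟩ := Module.projective_lifting_property N.mkQ
    (LinearMap.id : (M ⧸ N) →ₗ[A] (M ⧸ N)) N.mkQ_surjective
  -- projection onto N
  have hmem : ∀ x : M, x - s (N.mkQ x) ∈ N := by
    intro x
    rw [← Submodule.Quotient.mk_eq_zero, Submodule.Quotient.mk_sub]
    have : N.mkQ (s (N.mkQ x)) = N.mkQ x := by
      have := LinearMap.congr_fun hs (N.mkQ x)
      simpa using this
    simp [Submodule.Quotient.mk_sub, ← Submodule.mkQ_apply, this]
  let π : M →ₗ[A] N := LinearMap.codRestrict N (LinearMap.id - s ∘ₗ N.mkQ) (fun x => hmem x)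
  have hπ : ∀ n : N, π (n : M) = n := by
    intro n
    ext
    simp only [π, LinearMap.codRestrict_apply, LinearMap.sub_apply, LinearMap.id_apply,
      LinearMap.comp_apply]
    have h0 : N.mkQ (n : M) = 0 := (Submodule.Quotient.mk_eq_zero N).mpr n.2
    rw [h0, map_zero, sub_zero]
  -- N is finite torsion-free, hence free, with nonempty basis
  haveI : Module.Free A N := Module.free_of_finite_type_torsion_free'
  haveI : Nontrivial N := Submodule.nontrivial_iff_ne_bot.mpr hN
  let b := Module.Free.chooseBasis A N
  have hne : Nonempty (Module.Free.ChooseBasisIndex A N) := b.index_nonempty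
  obtain ⟨i⟩ := hne
  refine ⟨(b i : M), (b i).2, (b.coord i) ∘ₗ π, ?_⟩
  simp [hπ (b i)]
end

section
/- Let A be a Dedekind domain and M a finitely generated torsion-free A-module. If N is a pure submodule of M with rank at least 2, then N contains a unimodular vector of M. -/
open TensorProduct

section Aux

/-- Over a Dedekind domain, a finitely generated torsion-free module is projective. -/
lemma projective_of_tf_aux (A P : Type*) [CommRing A] [IsDedekindDomain A]
    [AddCommGroup P] [Module A P] [Module.Finite A P] [NoZeroSMulDivisors A P] :
    Module.Projective A P := by
  by_cases hA : IsField A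
  · letI := hA.toField
    have : Module.Free A P := Module.free_of_finite_type_torsion_free'
    infer_instance
  have hfp : Module.FinitePresentation A P := Module.finitePresentation_of_finite A P
  apply Module.projective_of_localization_maximal
  intro I hI
  have hprime : I.IsPrime := hI.isPrime
  have hbot : I ≠ ⊥ := Ring.ne_bot_of_isMaximal_of_not_isField hI hA
  have hpid : IsPrincipalIdealRing (Localization.AtPrime I) :=
    (IsLocalization.AtPrime.isDiscreteValuationRing_of_dedekind_domain A hbot
      (Localization.AtPrime I)).toIsPrincipalIdealRing
  have htf : NoZeroSMulDivisors (Localization.AtPrime I) (LocalizedModule I.primeCompl P) := by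
    constructor
    intro c x h
    by_cases hc : c = 0
    · exact Or.inl hc
    right
    induction c using Localization.induction_on with
    | H rt =>
      obtain ⟨r, t⟩ := rt
      induction x using LocalizedModule.induction_on with
      | h m s =>
        rw [LocalizedModule.mk_smul_mk] at h
        rw [show (0 : LocalizedModule I.primeCompl P) = LocalizedModule.mk 0 1 from
          (LocalizedModule.zero_mk _).symm, LocalizedModule.mk_eq] at h
        obtain ⟨u, hu⟩ := h
        simp only [one_smul, smul_zero] at hu
        have hr : r ≠ 0 := fun hr0 => hc (by simp [hr0, Localization.mk_zero])
        have hu0 : (u : A) ≠ 0 := fun h0 => u.2 (by rw [h0]; exact I.zero_mem)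
        have hm : m = 0 := by
          have h2 : ((u : A) * r) • m = 0 := by
            rw [mul_smul]; exact_mod_cast hu
          rcases smul_eq_zero.mp h2 with h' | h'
          · exact absurd h' (mul_ne_zero hu0 hr)
          · exact h'
        rw [hm]; exact LocalizedModule.zero_mk s
  have : Module.Free (Localization.AtPrime I) (LocalizedModule I.primeCompl P) :=
    Module.free_of_finite_type_torsion_free'
  infer_instance

/-- A nonzero pure submodule of a finitely generated torsion-free module over a Dedekind
domain is not contained in `𝔪 • M` for any maximal ideal `𝔪`. -/
lemma not_le_smul_of_pure_aux {A M : Type*} [CommRing A] [IsDedekindDomain A]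
    [AddCommGroup M] [Module A M] [Module.Finite A M] [NoZeroSMulDivisors A M]
    (P : Submodule A M) (hp : NoZeroSMulDivisors A (M ⧸ P)) (hP : P ≠ ⊥)
    (𝔪 : Ideal A) (h𝔪 : 𝔪.IsMaximal) : ¬ P ≤ 𝔪 • (⊤ : Submodule A M) := by
  intro hle
  have hproj : Module.Projective A (M ⧸ P) := projective_of_tf_aux A (M ⧸ P)
  obtain ⟨s, hs⟩ := Module.projective_lifting_property P.mkQ LinearMap.id P.mkQ_surjective
  set ρ : M →ₗ[A] M := LinearMap.id - s ∘ₗ P.mkQ with hρ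
  have hρP : ∀ x : M, ρ x ∈ P := by
    intro x
    have : P.mkQ (ρ x) = 0 := by
      simp only [hρ, LinearMap.sub_apply, LinearMap.id_apply, LinearMap.comp_apply, map_sub]
      have := LinearMap.congr_fun hs (P.mkQ x)
      simp only [LinearMap.comp_apply, LinearMap.id_apply] at this
      rw [this, sub_self]
    simpa [Submodule.Quotient.mk_eq_zero] using this
  have hρid : ∀ p ∈ P, ρ p = p := by
    intro p hp'
    simp only [hρ, LinearMap.sub_apply, LinearMap.id_apply, LinearMap.comp_apply]
    rw [show P.mkQ p = 0 by simpa [Submodule.Quotient.mk_eq_zero] using hp', map_zero, sub_zero]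
  have hPle : P ≤ 𝔪 • P := by
    intro p hpmem
    have h1 : ρ p ∈ 𝔪 • P := by
      refine Submodule.smul_induction_on (hle hpmem) ?_ ?_
      · intro r hr m _
        rw [map_smul]
        exact Submodule.smul_mem_smul hr (hρP m)
      · intro x y hx hy
        rw [map_add]; exact Submodule.add_mem _ hx hy
    rwa [hρid p hpmem] at h1
  obtain ⟨r, hr1, hr0⟩ :=
    Submodule.exists_sub_one_mem_and_smul_eq_zero_of_fg_of_le_smul 𝔪 P
      (IsNoetherian.noetherian P) hPle
  obtain ⟨p₀, hp₀P, hp₀⟩ := Submodule.ne_bot_iff P |>.mp hP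
  have : r • p₀ = 0 := hr0 p₀ hp₀P
  rcases smul_eq_zero.mp this with h' | h'
  · apply h𝔪.ne_top
    rw [Ideal.eq_top_iff_one]
    have : (0 : A) - 1 ∈ 𝔪 := h' ▸ hr1
    simpa using 𝔪.neg_mem this
  · exact hp₀ h'

/-- From rank at least two, extract two elements of `N` with linearly independent
images in `K ⊗ M`. -/
lemma exists_pair_indep_aux {A M : Type*} [CommRing A] [IsDedekindDomain A]
    [AddCommGroup M] [Module A M] [Module.Finite A M]
    (N : Submodule A M)
    (hrk : 2 ≤ Module.finrank (FractionRing A)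
      (Submodule.span (FractionRing A)
        ((TensorProduct.mk A (FractionRing A) M 1) '' (N : Set M)))) :
    ∃ u₀ ∈ N, ∃ u₁ ∈ N,
      LinearIndependent (FractionRing A)
        ![TensorProduct.mk A (FractionRing A) M 1 u₀,
          TensorProduct.mk A (FractionRing A) M 1 u₁] := by
  set ι := TensorProduct.mk A (FractionRing A) M 1
  set S : Set ((FractionRing A) ⊗[A] M) := ι '' (N : Set M) with hS
  obtain ⟨b, hbS, hbspan, hbind⟩ := exists_linearIndependent (FractionRing A) S
  have hb2 : ∃ w₀ ∈ b, ∃ w₁ ∈ b, w₀ ≠ w₁ := by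
    by_contra hcon
    push_neg at hcon
    have hsub : b.Subsingleton := fun x hx y hy => hcon x hx y hy
    rcases Set.Subsingleton.eq_empty_or_singleton hsub with h | ⟨x, h⟩
    · rw [← hbspan, h, Submodule.span_empty] at hrk
      rw [finrank_bot] at hrk
      omega
    · rw [← hbspan, h] at hrk
      have hle1 : Module.finrank (FractionRing A)
          (Submodule.span (FractionRing A) ({x} : Set ((FractionRing A) ⊗[A] M))) ≤ 1 := by
        classical
        simpa using finrank_span_le_card ({x} : Set ((FractionRing A) ⊗[A] M))
      omega
  obtain ⟨w₀, hw₀, w₁, hw₁, hne⟩ := hb2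
  obtain ⟨u₀, hu₀N, hu₀⟩ := hbS hw₀
  obtain ⟨u₁, hu₁N, hu₁⟩ := hbS hw₁
  refine ⟨u₀, hu₀N, u₁, hu₁N, ?_⟩
  rw [hu₀, hu₁]
  have hinj : Function.Injective (fun i : Fin 2 => (![(⟨w₀, hw₀⟩ : b), ⟨w₁, hw₁⟩] i)) := by
    intro i j hij
    fin_cases i <;> fin_cases j <;> simp_all
  have := hbind.comp _ hinj
  convert this using 1
  funext i
  fin_cases i <;> simp
  all_goals rfl

end Aux

/-- The rank of a submodule `N ≤ M` over a domain `A`: the dimension over the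
fraction field `K = Frac A` of the `K`-span of the image of `N` in `V = K ⊗[A] M`. -/
noncomputable def Submodule.rankIn {A M : Type*} [CommRing A] [IsDomain A]
    [AddCommGroup M] [Module A M] (N : Submodule A M) : ℕ :=
  Module.finrank (FractionRing A)
    (Submodule.span (FractionRing A)
      ((TensorProduct.mk A (FractionRing A) M 1) '' (N : Set M)))

/-- Let `A` be a Dedekind domain and `M` a finitely generated
torsion-free `A`-module. If `N` is a pure submodule of `M` of rank at least `2`,
then `N` contains a unimodular vector of `M`. -/
theorem exists_unimodular_of_pure_dedekind {A M : Type*} [CommRing A]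
    [IsDedekindDomain A] [AddCommGroup M] [Module A M]
    [Module.Finite A M] [NoZeroSMulDivisors A M]
    (N : Submodule A M) (hpure : NoZeroSMulDivisors A (M ⧸ N))
    (hrk : 2 ≤ N.rankIn) :
    ∃ v ∈ N, ∃ θ : M →ₗ[A] A, θ v = 1 := by
  classical
  have hprojM : Module.Projective A M := projective_of_tf_aux A M
  obtain ⟨nn, f, g, hfsurj, hginj, hfg⟩ := Module.Finite.exists_comp_eq_id_of_projective A M
  have hfg' : ∀ x : M, f (g x) = x := fun x => by
    have := LinearMap.congr_fun hfg x
    simpa using this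
  -- if all coordinates of `x` lie in `𝔪`, then `x ∈ 𝔪 • M`
  have key1 : ∀ (x : M) (𝔪 : Ideal A), (∀ j, g x j ∈ 𝔪) → x ∈ 𝔪 • (⊤ : Submodule A M) := by
    intro x 𝔪 hall
    have hx : x = f (g x) := (hfg' x).symm
    rw [hx, pi_eq_sum_univ (g x), map_sum]
    refine Submodule.sum_mem _ fun j _ => ?_
    rw [map_smul]
    exact Submodule.smul_mem_smul (hall j) Submodule.mem_top
  -- a linear functional maps `𝔪 • M` into `𝔪`
  have key2 : ∀ (θ : M →ₗ[A] A) (𝔪 : Ideal A) (x : M),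
      x ∈ 𝔪 • (⊤ : Submodule A M) → θ x ∈ 𝔪 := by
    intro θ 𝔪 x hx
    refine Submodule.smul_induction_on hx ?_ ?_
    · intro r hr m _
      rw [map_smul, smul_eq_mul]
      exact Ideal.mul_mem_right _ _ hr
    · intro a b ha hb
      rw [map_add]; exact Ideal.add_mem _ ha hb
  -- two elements of `N` with independent images
  obtain ⟨u₀, hu₀N, u₁, hu₁N, hind⟩ := exists_pair_indep_aux N hrk
  have hu₀0 : u₀ ≠ 0 := by
    intro h
    have := hind.ne_zero 0
    simp [h] at this
  -- a coordinate functional not vanishing on u₀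
  have hgu₀ : g u₀ ≠ 0 := by
    intro h
    exact hu₀0 (by rw [← hfg' u₀, h, map_zero])
  obtain ⟨j₀, hj₀⟩ : ∃ j, g u₀ j ≠ 0 := by
    by_contra hcon
    push_neg at hcon
    exact hgu₀ (funext hcon)
  set θ₀ : M →ₗ[A] A := (LinearMap.proj j₀) ∘ₗ g with hθ₀def
  have ha₀0 : θ₀ u₀ ≠ 0 := hj₀
  set a₀ := θ₀ u₀ with ha₀def
  -- a nonzero element of N ∩ ker θ₀
  set x : M := θ₀ u₁ • u₀ - a₀ • u₁ with hxdef
  have hxN : x ∈ N := Submodule.sub_mem _ (Submodule.smul_mem _ _ hu₀N)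
    (Submodule.smul_mem _ _ hu₁N)
  have hxker : θ₀ x = 0 := by
    simp only [hxdef, map_sub, map_smul, smul_eq_mul, ha₀def]
    ring
  have hx0 : x ≠ 0 := by
    intro h
    set K := FractionRing A
    set ι := TensorProduct.mk A K M 1
    have h' : (θ₀ u₁) • (ι u₀) - a₀ • (ι u₁) = 0 := by
      rw [← map_smul, ← map_smul, ← map_sub, ← hxdef, h, map_zero]
    rw [← algebraMap_smul K (θ₀ u₁) (ι u₀), ← algebraMap_smul K a₀ (ι u₁),
      sub_eq_add_neg, ← neg_smul] at h'
    have hpair := LinearIndependent.pair_iff.mp hind _ _ h'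
    have : algebraMap A K a₀ = 0 := by
      have := hpair.2
      simp at this
      exact this
    exact ha₀0 ((map_eq_zero_iff _ (IsFractionRing.injective A K)).mp this)
  set N₁ : Submodule A M := N ⊓ LinearMap.ker θ₀ with hN₁def
  have hN₁tf : NoZeroSMulDivisors A (M ⧸ N₁) := by
    constructor
    intro a y hay
    by_cases ha : a = 0
    · exact Or.inl ha
    right
    obtain ⟨m, rfl⟩ := Submodule.Quotient.mk_surjective N₁ y
    rw [← Submodule.Quotient.mk_smul, Submodule.Quotient.mk_eq_zero] at hay
    obtain ⟨hamN, hamker⟩ := hay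
    have hmN : m ∈ N := by
      have h1 : a • Submodule.Quotient.mk (p := N) m = 0 := by
        rw [← Submodule.Quotient.mk_smul, Submodule.Quotient.mk_eq_zero]
        exact hamN
      rcases smul_eq_zero.mp h1 with h' | h'
      · exact absurd h' ha
      · rwa [Submodule.Quotient.mk_eq_zero] at h'
    have hmker : θ₀ m = 0 := by
      have : a * θ₀ m = 0 := by
        rw [← smul_eq_mul, ← map_smul]
        exact hamker
      rcases mul_eq_zero.mp this with h' | h'
      · exact absurd h' ha
      · exact h'
    rw [Submodule.Quotient.mk_eq_zero]
    exact ⟨hmN, hmker⟩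
  have hN₁ne : N₁ ≠ ⊥ := by
    intro h
    apply hx0
    have : x ∈ N₁ := ⟨hxN, hxker⟩
    rwa [h, Submodule.mem_bot] at this
  -- the finitely many maximal ideals containing a₀
  have ha₀span : Ideal.span {a₀} ≠ ⊥ := by
    simpa [Ideal.span_singleton_eq_bot] using ha₀0
  have hfin : {𝔪 : Ideal A | 𝔪.IsMaximal ∧ a₀ ∈ 𝔪}.Finite := by
    haveI := UniqueFactorizationMonoid.fintypeSubtypeDvd (Ideal.span {a₀} : Ideal A) ha₀span
    have hdvd : {J : Ideal A | J ∣ Ideal.span {a₀}}.Finite := by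
      rw [← Set.finite_coe_iff]
      exact Finite.of_fintype {J : Ideal A // J ∣ Ideal.span {a₀}}
    refine hdvd.subset ?_
    rintro 𝔪 ⟨hmax, hmem⟩
    rw [Set.mem_setOf_eq, Ideal.dvd_iff_le]
    rwa [Ideal.span_singleton_le_iff_mem]
  set T : Finset (Ideal A) := hfin.toFinset with hTdef
  have hTmem : ∀ 𝔪, 𝔪 ∈ T ↔ 𝔪.IsMaximal ∧ a₀ ∈ 𝔪 := fun 𝔪 => hfin.mem_toFinset
  -- choose correction vectors
  have hv : ∀ 𝔪 ∈ T, ∃ w, w ∈ N₁ ∧ u₀ + w ∉ 𝔪 • (⊤ : Submodule A M) := by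
    intro 𝔪 h𝔪T
    obtain ⟨hmax, -⟩ := (hTmem 𝔪).mp h𝔪T
    by_cases hcase : u₀ ∈ 𝔪 • (⊤ : Submodule A M)
    · obtain ⟨w, hwN₁, hw⟩ : ∃ w ∈ N₁, w ∉ 𝔪 • (⊤ : Submodule A M) := by
        by_contra hcon
        push_neg at hcon
        exact not_le_smul_of_pure_aux N₁ hN₁tf hN₁ne 𝔪 hmax hcon
      refine ⟨w, hwN₁, fun hc => hw ?_⟩
      have := Submodule.sub_mem _ hc hcase
      simpa using this
    · exact ⟨0, Submodule.zero_mem _, by simpa using hcase⟩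
  choose v hvN₁ hvnot using hv
  -- choose CRT coefficients
  have hc : ∀ 𝔪 ∈ T, ∃ c : A, c - 1 ∈ 𝔪 ∧ ∀ 𝔪' ∈ T, 𝔪' ≠ 𝔪 → c ∈ 𝔪' := by
    intro 𝔪 h𝔪
    obtain ⟨hmax, -⟩ := (hTmem 𝔪).mp h𝔪
    have hsup : 𝔪 ⊔ (∏ 𝔪' ∈ T.erase 𝔪, 𝔪') = ⊤ := by
      rw [← Ideal.isCoprime_iff_sup_eq]
      refine IsCoprime.prod_right fun 𝔪' h' => ?_
      rw [Ideal.isCoprime_iff_sup_eq]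
      obtain ⟨hne', hT'⟩ := Finset.mem_erase.mp h'
      obtain ⟨hmax', -⟩ := (hTmem 𝔪').mp hT'
      exact hmax.coprime_of_ne hmax' (Ne.symm hne')
    have h1 : (1 : A) ∈ 𝔪 ⊔ (∏ 𝔪' ∈ T.erase 𝔪, 𝔪') := by
      rw [hsup]; exact Submodule.mem_top
    obtain ⟨m, hm, q, hq, hmq⟩ := Submodule.mem_sup.mp h1
    refine ⟨q, ?_, ?_⟩
    · have : q - 1 = -m := by rw [← hmq]; ring
      rw [this]
      exact 𝔪.neg_mem hm
    · intro 𝔪' h𝔪' hne'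
      have hle : (∏ 𝔪'' ∈ T.erase 𝔪, 𝔪'') ≤ 𝔪' := by
        refine le_trans Ideal.prod_le_inf ?_
        exact Finset.inf_le (Finset.mem_erase.mpr ⟨hne', h𝔪'⟩)
      exact hle hq
  choose c hc1 hc2 using hc
  -- the candidate vector
  set vsum : M := ∑ p ∈ T.attach, c p.1 p.2 • v p.1 p.2 with hvsumdef
  have hvsumN₁ : vsum ∈ N₁ :=
    Submodule.sum_mem _ fun p _ => Submodule.smul_mem _ _ (hvN₁ p.1 p.2)
  set n : M := u₀ + vsum with hndef
  have hnN : n ∈ N := Submodule.add_mem _ hu₀N (hvsumN₁.1)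
  have hθ₀n : θ₀ n = a₀ := by
    have : θ₀ vsum = 0 := hvsumN₁.2
    rw [hndef, map_add, this, add_zero, ha₀def]
  -- n is not in 𝔪 • M for any maximal 𝔪
  have hnot : ∀ 𝔪 : Ideal A, 𝔪.IsMaximal → n ∉ 𝔪 • (⊤ : Submodule A M) := by
    intro 𝔪 hmax hmem
    by_cases hT : 𝔪 ∈ T
    · have hdiff : vsum - v 𝔪 hT ∈ 𝔪 • (⊤ : Submodule A M) := by
        have hsplit : vsum = c 𝔪 hT • v 𝔪 hT +
            ∑ p ∈ T.attach.erase ⟨𝔪, hT⟩, c p.1 p.2 • v p.1 p.2 := by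
          rw [hvsumdef]
          exact (Finset.add_sum_erase _ _ (Finset.mem_attach T ⟨𝔪, hT⟩)).symm
        have : vsum - v 𝔪 hT = (c 𝔪 hT - 1) • v 𝔪 hT +
            ∑ p ∈ T.attach.erase ⟨𝔪, hT⟩, c p.1 p.2 • v p.1 p.2 := by
          rw [hsplit, sub_smul, one_smul]
          abel
        rw [this]
        refine Submodule.add_mem _ ?_ ?_
        · exact Submodule.smul_mem_smul (hc1 𝔪 hT) Submodule.mem_top
        · refine Submodule.sum_mem _ fun p hp => ?_
          have hpne : p.1 ≠ 𝔪 := by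
            intro h
            apply (Finset.mem_erase.mp hp).1
            exact Subtype.ext h
          exact Submodule.smul_mem_smul (hc2 p.1 p.2 𝔪 hT hpne.symm) Submodule.mem_top
      have : u₀ + v 𝔪 hT ∈ 𝔪 • (⊤ : Submodule A M) := by
        have h2 := Submodule.sub_mem _ hmem hdiff
        have : n - (vsum - v 𝔪 hT) = u₀ + v 𝔪 hT := by
          rw [hndef]; abel
        rwa [this] at h2
      exact hvnot 𝔪 hT this
    · have ha₀𝔪 : a₀ ∉ 𝔪 := by
        intro h
        exact hT ((hTmem 𝔪).mpr ⟨hmax, h⟩)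
      exact ha₀𝔪 (hθ₀n ▸ key2 θ₀ 𝔪 n hmem)
  -- the ideal of values of functionals at n is the whole ring
  set Iₙ : Ideal A := LinearMap.range ((LinearMap.applyₗ (R := A) n) :
    (M →ₗ[A] A) →ₗ[A] A) with hIdef
  have hItop : Iₙ = ⊤ := by
    by_contra hne
    obtain ⟨𝔪, hmax, hle⟩ := Ideal.exists_le_maximal Iₙ hne
    apply hnot 𝔪 hmax
    apply key1 n 𝔪
    intro j
    have : g n j ∈ Iₙ := ⟨(LinearMap.proj j) ∘ₗ g, by simp⟩
    exact hle this
  have h1 : (1 : A) ∈ Iₙ := hItop ▸ Submodule.mem_top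
  obtain ⟨θ, hθ⟩ := h1
  exact ⟨n, hnN, θ, hθ⟩
end

section
/- Let A be a Dedekind domain, M a finitely generated torsion-free A-module, and N ≤ M a pure submodule of rank 1. Then N contains a unimodular vector of M if and only if N is a free A-module. -/
open TensorProduct

section Aux

variable {A M : Type*} [CommRing A] [IsDomain A] [AddCommGroup M] [Module A M]

private lemma mk_one_injective [NoZeroSMulDivisors A M] :
    Function.Injective (TensorProduct.mk A (FractionRing A) M 1) := by
  haveI : IsLocalizedModule (nonZeroDivisors A) (TensorProduct.mk A (FractionRing A) M 1) :=
    (isLocalizedModule_iff_isBaseChange (nonZeroDivisors A) (FractionRing A) _).mpr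
      (TensorProduct.isBaseChange A M (FractionRing A))
  intro x y hxy
  rw [← sub_eq_zero, ← map_sub] at hxy
  obtain ⟨s, hs⟩ := (IsLocalizedModule.eq_zero_iff (nonZeroDivisors A)
    (TensorProduct.mk A (FractionRing A) M 1)).mp hxy
  rw [Submonoid.smul_def, smul_eq_zero] at hs
  rcases hs with h | h
  · exact absurd h (nonZeroDivisors.coe_ne_zero s)
  · exact sub_eq_zero.mp h

/-- Key consequence of `rankIn = 1`: denominators can be cleared between two elements. -/
private lemma exists_denom [NoZeroSMulDivisors A M] {N : Submodule A M}
    (hrk : N.rankIn = 1) {v w : M} (hv : v ∈ N) (hw : w ∈ N) (hv0 : v ≠ 0) :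
    ∃ (a : A) (s : nonZeroDivisors A), (s : A) • w = a • v := by
  simp only [Submodule.rankIn] at hrk
  set K := FractionRing A
  set f := TensorProduct.mk A K M 1 with hf
  have hinj : Function.Injective f := mk_one_injective
  set S := Submodule.span K (f '' (N : Set M)) with hS
  have hfv : f v ∈ S := Submodule.subset_span ⟨v, hv, rfl⟩
  have hfw : f w ∈ S := Submodule.subset_span ⟨w, hw, rfl⟩
  have hfv0 : (⟨f v, hfv⟩ : S) ≠ 0 := by
    intro h
    apply hv0
    apply hinj
    rw [map_zero]
    exact congrArg Subtype.val h
  obtain ⟨c, hc⟩ := (finrank_eq_one_iff_of_nonzero' (⟨f v, hfv⟩ : S) hfv0).mp hrk ⟨f w, hfw⟩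
  have hc' : c • f v = f w := congrArg Subtype.val hc
  obtain ⟨⟨a, s⟩, hmk⟩ := IsLocalization.mk'_surjective (nonZeroDivisors A) c
  dsimp only at hmk
  refine ⟨a, s, hinj ?_⟩
  have : (s : A) • f w = (a : A) • f v := by
    rw [← hc', ← algebraMap_smul K (s : A), ← algebraMap_smul K a, smul_smul, ← hmk,
      IsLocalization.mk'_spec']
  rw [map_smul, map_smul, this]

end Aux

section Loc

private lemma pid_localization {A : Type*} [CommRing A] [IsDedekindDomain A]
    (P : Ideal A) [hPm : P.IsMaximal] :
    IsPrincipalIdealRing (Localization.AtPrime P) := by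
  by_cases hP : P = ⊥
  · subst hP
    have hF : IsField A := by
      by_contra h
      exact Ring.ne_bot_of_isMaximal_of_not_isField hPm h rfl
    letI := hF.toField
    have hunits : (⊥ : Ideal A).primeCompl ≤ IsUnit.submonoid A := by
      intro x hx
      have : x ≠ 0 := by simpa [Ideal.primeCompl, Ideal.mem_bot] using hx
      exact isUnit_iff_ne_zero.mpr this
    have e := IsLocalization.atUnits A (⊥ : Ideal A).primeCompl
      (S := Localization.AtPrime (⊥ : Ideal A)) hunits
    exact IsPrincipalIdealRing.of_surjective e.toRingHom e.surjective
  · haveI := IsLocalization.AtPrime.isDiscreteValuationRing_of_dedekind_domain A hP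
      (Localization.AtPrime P)
    infer_instance

private lemma noZeroSMulDivisors_localizedModule {A : Type*} [CommRing A] [IsDomain A]
    {Q : Type*} [AddCommGroup Q] [Module A Q] [NoZeroSMulDivisors A Q]
    (P : Ideal A) [P.IsPrime] :
    NoZeroSMulDivisors (Localization.AtPrime P) (LocalizedModule P.primeCompl Q) := by
  refine ⟨fun {c x} hcx => ?_⟩
  induction x using LocalizedModule.induction_on with
  | h m t =>
    induction c using Localization.induction_on with
    | H rs =>
      obtain ⟨r, s⟩ := rs
      rw [LocalizedModule.mk_smul_mk, ← LocalizedModule.zero_mk (1 : P.primeCompl),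
        LocalizedModule.mk_eq] at hcx
      obtain ⟨u, hu⟩ := hcx
      simp only [smul_zero, one_smul] at hu
      rw [Submonoid.smul_def, smul_smul] at hu
      rcases smul_eq_zero.mp hu with h | h
      · rcases mul_eq_zero.mp h with h' | h'
        · exact absurd h' (fun hz => u.2 (hz ▸ P.zero_mem))
        · left
          rw [Localization.mk_eq_mk', h', IsLocalization.mk'_zero]
      · right
        rw [h]
        exact LocalizedModule.zero_mk t

end Loc

/-- Let `A` be a Dedekind domain, `M` a finitely generated
torsion-free `A`-module, and `N ≤ M` a pure submodule of rank `1`. Then `N`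
contains a unimodular vector of `M` if and only if `N` is a free `A`-module. -/
theorem unimodular_iff_free_of_pure_rank_one {A M : Type*} [CommRing A]
    [IsDedekindDomain A] [AddCommGroup M] [Module A M]
    [Module.Finite A M] [NoZeroSMulDivisors A M]
    (N : Submodule A M) (hpure : NoZeroSMulDivisors A (M ⧸ N))
    (hrk : N.rankIn = 1) :
    (∃ v ∈ N, ∃ θ : M →ₗ[A] A, θ v = 1) ↔ Module.Free A N := by
  constructor
  · rintro ⟨v, hv, θ, hθ⟩
    have hv0 : v ≠ 0 := by
      rintro rfl
      rw [map_zero] at hθ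
      exact zero_ne_one hθ
    have hNspan : N = Submodule.span A {v} := by
      apply le_antisymm
      · intro w hw
        obtain ⟨a, s, hsw⟩ := exists_denom hrk hv hw hv0
        have h1 : (s : A) * θ w = a := by
          have := congrArg θ hsw
          simpa [smul_eq_mul, hθ] using this
        have h2 : (s : A) • w = (s : A) • (θ w • v) := by
          rw [hsw, ← h1, mul_smul]
        have hw' : w = θ w • v :=
          smul_right_injective M (nonZeroDivisors.coe_ne_zero s) h2
        exact Submodule.mem_span_singleton.mpr ⟨θ w, hw'.symm⟩
      · rwa [Submodule.span_singleton_le_iff_mem]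
    rw [hNspan]
    exact Module.Free.of_equiv (LinearEquiv.toSpanNonzeroSingleton A M v hv0)
  · intro hfree
    haveI : IsNoetherian A M := isNoetherian_of_isNoetherianRing_of_finite A M
    haveI : Module.Finite A N := Module.Finite.iff_fg.mpr (IsNoetherian.noetherian N)
    let b := Module.Free.chooseBasis A N
    haveI hne : Nonempty (Module.Free.ChooseBasisIndex A N) := by
      by_contra h
      rw [not_nonempty_iff] at h
      haveI : Subsingleton (Module.Free.ChooseBasisIndex A N →₀ A) :=
        ⟨fun f g => Finsupp.ext fun i => (h.false i).elim⟩
      haveI : Subsingleton N := b.repr.toEquiv.subsingleton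
      have hbot : N = ⊥ := by
        rw [Submodule.eq_bot_iff]
        intro x hx
        exact congrArg Subtype.val (Subsingleton.elim (⟨x, hx⟩ : N) 0)
      rw [hbot] at hrk
      simp only [Submodule.rankIn] at hrk
      have hsp : Submodule.span (FractionRing A)
          (⇑(TensorProduct.mk A (FractionRing A) M 1) '' (((⊥ : Submodule A M)) : Set M)) = ⊥ := by
        simp
      rw [hsp, finrank_bot] at hrk
      exact absurd hrk (by norm_num)
    have i : Module.Free.ChooseBasisIndex A N := Classical.arbitrary _
    -- the quotient is projective
    haveI : Module.FinitePresentation A (M ⧸ N) := Module.finitePresentation_of_finite A _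
    haveI hproj : Module.Projective A (M ⧸ N) := by
      apply Module.projective_of_localization_maximal
      intro P hP
      haveI : IsPrincipalIdealRing (Localization.AtPrime P) := pid_localization P
      haveI : Module.Finite (Localization.AtPrime P) (LocalizedModule P.primeCompl (M ⧸ N)) :=
        Module.Finite.of_isLocalizedModule P.primeCompl
          (LocalizedModule.mkLinearMap P.primeCompl (M ⧸ N))
      haveI : NoZeroSMulDivisors (Localization.AtPrime P)
          (LocalizedModule P.primeCompl (M ⧸ N)) :=
        noZeroSMulDivisors_localizedModule P
      haveI : Module.Free (Localization.AtPrime P) (LocalizedModule P.primeCompl (M ⧸ N)) :=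
        Module.free_of_finite_type_torsion_free'
      infer_instance
    obtain ⟨σ, hσ⟩ := Module.projective_lifting_property N.mkQ LinearMap.id N.mkQ_surjective
    let ρ : M →ₗ[A] M := LinearMap.id - σ ∘ₗ N.mkQ
    have hmem : ∀ x : M, ρ x ∈ N := by
      intro x
      have h1 := LinearMap.congr_fun hσ (N.mkQ x)
      simp only [LinearMap.comp_apply, LinearMap.id_apply] at h1
      have h2 : N.mkQ (ρ x) = 0 := by
        simp only [ρ, LinearMap.sub_apply, LinearMap.id_apply, LinearMap.comp_apply, map_sub]
        rw [h1, sub_self]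
      rw [Submodule.mkQ_apply] at h2
      exact (Submodule.Quotient.mk_eq_zero N).mp h2
    have hρ_fix : ∀ x ∈ N, ρ x = x := by
      intro x hx
      have h0 : N.mkQ x = 0 := by
        rw [Submodule.mkQ_apply, Submodule.Quotient.mk_eq_zero]
        exact hx
      simp [ρ, h0]
    refine ⟨(b i : M), (b i).2, (b.coord i) ∘ₗ LinearMap.codRestrict N ρ hmem, ?_⟩
    have hcod : LinearMap.codRestrict N ρ hmem ((b i : M)) = b i := by
      apply Subtype.ext
      simpa using hρ_fix _ (b i).2
    simp [LinearMap.comp_apply, hcod]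
end

section
/- Let A be a Dedekind domain which is not a PID and let I ⊂ A be a nonprincipal ideal. Then the dual module I* = Hom_A(I, A) embeds into A² as a pure submodule of rank 1 that contains no unimodular vector of A². -/
open TensorProduct UniqueFactorizationMonoid

theorem my_exists_two_gen {A : Type*} [CommRing A] [IsDedekindDomain A]
    (I : Ideal A) (hI : I ≠ ⊥) : ∃ a b : A, a ≠ 0 ∧ I = Ideal.span {a, b} := by
  classical
  obtain ⟨a, haI, ha0⟩ := Submodule.exists_mem_ne_zero_of_ne_bot hI
  have haspan : Ideal.span {a} ≤ I := by
    simpa [Ideal.span_le] using haI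
  have haspan0 : (Ideal.span {a} : Ideal A) ≠ ⊥ := by
    simpa [Ideal.span_eq_bot] using ha0
  by_cases htop : (Ideal.span {a} : Ideal A) = ⊤
  · refine ⟨a, 0, ha0, ?_⟩
    have : I = ⊤ := top_le_iff.mp (htop ▸ haspan)
    rw [this]
    refine (le_antisymm le_top ?_).symm
    rw [← htop]
    exact Ideal.span_mono (by simp)
  -- main case
  set S := (normalizedFactors (Ideal.span {a} : Ideal A)).toFinset with hS
  have hprime : ∀ p ∈ S, Prime p := fun p hp =>
    prime_of_normalized_factor p (Multiset.mem_toFinset.mp hp)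
  set n : Ideal A → ℕ := fun p => (normalizedFactors I).count p with hn
  have hbp : ∀ p ∈ S, ∃ x ∈ p ^ (n p), x ∉ p ^ (n p + 1) := by
    intro p hp
    have hp' := hprime p hp
    haveI := Ideal.isPrime_of_prime hp'
    exact Ideal.exists_mem_pow_notMem_pow_succ p hp'.ne_zero
      (Ideal.isPrime_of_prime hp').ne_top (n p)
  choose! bp hbp1 hbp2 using hbp
  obtain ⟨b, hb⟩ := IsDedekindDomain.exists_forall_sub_mem_ideal (s := S) id
    (fun p => n p + 1) (fun p hp => hprime p hp)
    (fun p hp q hq hne => hne) (fun p => bp p)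
  have hbmem : ∀ p ∈ S, b ∈ p ^ (n p) := by
    intro p hp
    have h1 : b - bp p ∈ p ^ (n p + 1) := hb p hp
    have h2 : b - bp p ∈ p ^ (n p) := Ideal.pow_le_pow_right (Nat.le_succ _) h1
    simpa using add_mem h2 (hbp1 p hp)
  have hbnot : ∀ p ∈ S, b ∉ p ^ (n p + 1) := by
    intro p hp hmem
    exact hbp2 p hp (by simpa using sub_mem hmem (hb p hp))
  -- S is nonempty
  obtain ⟨M, hM, hMa⟩ := Ideal.exists_le_maximal _ htop
  have hMbot : M ≠ ⊥ := fun h => haspan0 (le_bot_iff.mp (h ▸ hMa))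
  have hMprime : Prime M := Ideal.prime_of_isPrime hMbot hM.isPrime
  obtain ⟨q, hqS, -⟩ := exists_mem_normalizedFactors_of_dvd haspan0
    hMprime.irreducible (Ideal.dvd_iff_le.mpr hMa)
  have hSne : (Ideal.span {a} : Ideal A).IsPrime → True := fun _ => trivial
  have hb0 : b ≠ 0 := by
    intro h
    exact hbnot q (Multiset.mem_toFinset.mpr hqS) (by simp [h])
  have hbspan0 : (Ideal.span {b} : Ideal A) ≠ ⊥ := by
    simpa [Ideal.span_eq_bot] using hb0
  -- count of normalizedFactors of span {b} at p ∈ S is n p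
  have hcountb : ∀ p ∈ S, (normalizedFactors (Ideal.span {b} : Ideal A)).count p = n p := by
    intro p hp
    haveI := Ideal.isPrime_of_prime (hprime p hp)
    refine Ideal.count_normalizedFactors_eq ?_ ?_
    · simpa [Ideal.span_le] using hbmem p hp
    · simpa [Ideal.span_le] using hbnot p hp
  -- membership in S from being a normalized factor
  have hfactS : ∀ {J : Ideal A}, J ≠ ⊥ → Ideal.span {a} ≤ J →
      normalizedFactors J ≤ normalizedFactors (Ideal.span {a} : Ideal A) := by
    intro J hJ hle
    exact (dvd_iff_normalizedFactors_le_normalizedFactors hJ haspan0).mp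
      (Ideal.dvd_iff_le.mpr hle)
  -- b ∈ I
  have hbI : b ∈ I := by
    have : I ∣ Ideal.span {b} := by
      rw [dvd_iff_normalizedFactors_le_normalizedFactors hI hbspan0, Multiset.le_iff_count]
      intro p
      by_cases hpI : p ∈ normalizedFactors I
      · have hpS : p ∈ S := Multiset.mem_toFinset.mpr
          (Multiset.mem_of_le (hfactS hI haspan) hpI)
        rw [hcountb p hpS]
      · simp [Multiset.count_eq_zero_of_notMem hpI]
    simpa [Ideal.span_le] using Ideal.le_of_dvd this
  refine ⟨a, b, ha0, ?_⟩
  rw [Ideal.span_insert]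
  refine le_antisymm ?_ (sup_le (by simpa [Ideal.span_le] using haI)
    (by simpa [Ideal.span_le] using hbI))
  set J := Ideal.span {a} ⊔ Ideal.span {b} with hJ
  have hJ0 : J ≠ ⊥ := fun h => haspan0 (le_bot_iff.mp (h ▸ le_sup_left))
  have : J ∣ I := by
    rw [dvd_iff_normalizedFactors_le_normalizedFactors hJ0 hI, Multiset.le_iff_count]
    intro p
    by_cases hpJ : p ∈ normalizedFactors J
    · have hpS : p ∈ S := Multiset.mem_toFinset.mpr
        (Multiset.mem_of_le (hfactS hJ0 le_sup_left) hpJ)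
      have h1 : normalizedFactors J ≤ normalizedFactors (Ideal.span {b} : Ideal A) :=
        (dvd_iff_normalizedFactors_le_normalizedFactors hJ0 hbspan0).mp
          (Ideal.dvd_iff_le.mpr le_sup_right)
      calc (normalizedFactors J).count p
          ≤ (normalizedFactors (Ideal.span {b} : Ideal A)).count p :=
            Multiset.le_iff_count.mp h1 p
        _ = n p := hcountb p hpS
        _ = (normalizedFactors I).count p := rfl
    · simp [Multiset.count_eq_zero_of_notMem hpJ]
  exact Ideal.le_of_dvd this

/-- Let `A` be a Dedekind domain and `I ⊂ A` a nonzero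
nonprincipal ideal. Then the dual module `I* = Hom_A(I, A)` embeds into `A²`
as a pure submodule of rank `1` containing no unimodular vector of `A²`. -/
theorem dual_of_nonprincipal_embeds_pure_no_unimodular {A : Type*} [CommRing A]
    [IsDedekindDomain A] (I : Ideal A) (hI : I ≠ ⊥) (hnp : ¬ I.IsPrincipal) :
    ∃ f : (↥I →ₗ[A] A) →ₗ[A] A × A,
      Function.Injective f ∧
      NoZeroSMulDivisors A ((A × A) ⧸ LinearMap.range f) ∧
      (LinearMap.range f).rankIn = 1 ∧
      ∀ v ∈ LinearMap.range f, ∀ θ : A × A →ₗ[A] A, θ v ≠ 1 := by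
  classical
  obtain ⟨a, b, ha0, hab⟩ := my_exists_two_gen I hI
  have haI : a ∈ I := hab ▸ Ideal.subset_span (by simp)
  have hbI : b ∈ I := hab ▸ Ideal.subset_span (by simp)
  set aI : ↥I := ⟨a, haI⟩ with haIdef
  set bI : ↥I := ⟨b, hbI⟩ with hbIdef
  -- the key commutation relation for elements of the dual
  have key : ∀ (φ : ↥I →ₗ[A] A) (x y : ↥I), (x : A) * φ y = (y : A) * φ x := by
    intro φ x y
    have h1 : (x : A) • y = (y : A) • x := Subtype.ext (mul_comm _ _)
    have := congrArg φ h1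
    rwa [map_smul, map_smul, smul_eq_mul, smul_eq_mul] at this
  set f : (↥I →ₗ[A] A) →ₗ[A] A × A :=
    (LinearMap.applyₗ aI).prod (LinearMap.applyₗ bI) with hfdef
  have hfapp : ∀ φ : ↥I →ₗ[A] A, f φ = (φ aI, φ bI) := fun φ => rfl
  have hinj : Function.Injective f := by
    intro φ₁ φ₂ h
    have h1 : φ₁ aI = φ₂ aI := congrArg Prod.fst h
    ext z
    refine mul_left_cancel₀ ha0 ?_
    calc a * φ₁ z = (z : A) * φ₁ aI := (key φ₁ z aI).symm
      _ = (z : A) * φ₂ aI := by rw [h1]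
      _ = a * φ₂ z := key φ₂ z aI
  set g : A × A →ₗ[A] A := b • LinearMap.fst A A A - a • LinearMap.snd A A A with hgdef
  have hgapp : ∀ v : A × A, g v = b * v.1 - a * v.2 := fun v => rfl
  have hrange : LinearMap.range f = LinearMap.ker g := by
    ext v
    constructor
    · rintro ⟨φ, rfl⟩
      rw [LinearMap.mem_ker, hfapp, hgapp]
      show b * φ aI - a * φ bI = 0
      rw [sub_eq_zero]
      exact (key φ aI bI).symm
    · intro hv
      obtain ⟨x, y⟩ := v
      rw [LinearMap.mem_ker, hgapp] at hv
      have hxy : b * x = a * y := sub_eq_zero.mp hv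
      have hdiv : ∀ z : ↥I, ∃ w : A, a * w = x * (z : A) := by
        intro z
        have hz : (z : A) ∈ Ideal.span {a, b} := by rw [← hab]; exact z.2
        obtain ⟨u, v, huv⟩ := Ideal.mem_span_pair.mp hz
        exact ⟨u * x + v * y, by linear_combination x * huv - v * hxy⟩
      choose w hw using hdiv
      refine ⟨{ toFun := w, map_add' := ?_, map_smul' := ?_ }, ?_⟩
      · intro z₁ z₂
        refine mul_left_cancel₀ ha0 ?_
        rw [hw, mul_add, hw, hw, Submodule.coe_add, mul_add]
      · intro c z
        refine mul_left_cancel₀ ha0 ?_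
        have h := hw z
        have hcz := hw (c • z)
        rw [Submodule.coe_smul, smul_eq_mul] at hcz
        rw [RingHom.id_apply, smul_eq_mul]
        linear_combination hcz - c * h
      · rw [hfapp]
        have h1 : w aI = x := mul_left_cancel₀ ha0 (by rw [hw]; exact mul_comm x a)
        have h2 : w bI = y := mul_left_cancel₀ ha0 (by rw [hw]; show x * b = a * y; linear_combination hxy)
        exact Prod.ext h1 h2
  refine ⟨f, hinj, ?_, ?_, ?_⟩
  · -- torsion-free quotient
    refine ⟨fun {c v} hcv => ?_⟩
    obtain ⟨u, rfl⟩ := Submodule.Quotient.mk_surjective _ v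
    rw [← Submodule.Quotient.mk_smul, Submodule.Quotient.mk_eq_zero, hrange,
      LinearMap.mem_ker, map_smul, smul_eq_mul] at hcv
    rcases mul_eq_zero.mp hcv with h | h
    · exact Or.inl h
    · exact Or.inr (by rw [Submodule.Quotient.mk_eq_zero, hrange, LinearMap.mem_ker]; exact h)
  · -- rank 1
    set K := FractionRing A
    set t : K ⊗[A] (A × A) := TensorProduct.mk A K (A × A) 1 (a, b) with htdef
    have ha0' : algebraMap A K a ≠ 0 := fun h =>
      ha0 ((IsFractionRing.to_map_eq_zero_iff (K := K)).mp h)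
    have ht0 : t ≠ 0 := by
      intro h
      set ev : K ⊗[A] (A × A) →ₗ[A] K := TensorProduct.lift
        ((LinearMap.mul A K).compl₂ ((Algebra.linearMap A K).comp (LinearMap.fst A A A)))
      have : ev t = algebraMap A K a := by
        simp [ev, htdef, TensorProduct.mk_apply]
      rw [h, map_zero] at this
      exact ha0' this.symm
    have hspan : Submodule.span K ((TensorProduct.mk A K (A × A) 1) ''
        ((LinearMap.range f : Submodule A (A × A)) : Set (A × A))) = Submodule.span K {t} := by
      refine le_antisymm ?_ ?_
      · rw [Submodule.span_le]
        rintro _ ⟨v, hv, rfl⟩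
        rw [SetLike.mem_coe, hrange, LinearMap.mem_ker, hgapp] at hv
        obtain ⟨x, y⟩ := v
        have hxy : b * x = a * y := sub_eq_zero.mp hv
        have h1 : (a : A) • ((x, y) : A × A) = x • ((a, b) : A × A) := by
          refine Prod.ext (mul_comm a x) ?_
          show a * y = x * b
          linear_combination -hxy
        have h2 : algebraMap A K a • (TensorProduct.mk A K (A × A) 1 (x, y))
            = algebraMap A K x • t := by
          rw [algebraMap_smul, algebraMap_smul, htdef, TensorProduct.mk_apply,
            TensorProduct.mk_apply, ← tmul_smul, ← tmul_smul, h1]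
        have h3 : TensorProduct.mk A K (A × A) 1 (x, y)
            = ((algebraMap A K a)⁻¹ * algebraMap A K x) • t := by
          rw [mul_smul, ← h2, smul_smul, inv_mul_cancel₀ ha0', one_smul]
        rw [SetLike.mem_coe, h3]
        exact Submodule.smul_mem _ _ (Submodule.mem_span_singleton_self t)
      · rw [Submodule.span_le, Set.singleton_subset_iff]
        refine Submodule.subset_span ⟨(a, b), ?_, rfl⟩
        rw [SetLike.mem_coe, hrange, LinearMap.mem_ker, hgapp]
        show b * a - a * b = 0
        ring
    rw [Submodule.rankIn, hspan, finrank_span_singleton ht0]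
  · -- no unimodular vector
    rintro v ⟨ψ, rfl⟩ θ hθ
    rw [hfapp] at hθ
    have hdec : ((ψ aI, ψ bI) : A × A) = (ψ aI) • ((1 : A), (0 : A)) + (ψ bI) • (0, 1) := by
      refine Prod.ext ?_ ?_ <;> simp
    rw [hdec, map_add, map_smul, map_smul, smul_eq_mul, smul_eq_mul] at hθ
    set α := θ (1, 0)
    set β := θ (0, 1)
    set c := a * α + b * β with hcdef
    have hcI : c ∈ I := I.add_mem (I.mul_mem_right _ haI) (I.mul_mem_right _ hbI)
    refine hnp ⟨⟨c, ?_⟩⟩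
    refine le_antisymm ?_ (by simpa [Ideal.span_le] using hcI)
    intro x hx
    rw [Submodule.mem_span_singleton]
    refine ⟨ψ ⟨x, hx⟩, ?_⟩
    rw [smul_eq_mul]
    have h1 : x * ψ aI = a * ψ ⟨x, hx⟩ := key ψ ⟨x, hx⟩ aI
    have h2 : x * ψ bI = b * ψ ⟨x, hx⟩ := key ψ ⟨x, hx⟩ bI
    linear_combination x * hθ - α * h1 - β * h2
end

section
/- Let G be an abelian group generated by symbols [v₀,…,v_{n-1}] for tuples of nonzero vectors of an n-dimensional vector space V, subject to: (c) [v₀,…,v_{n-1}] = 0 whenever v₀,…,v_{n-1} are linearly dependent, and (d) Σ_{i=0}^{n} (-1)^i [v₀,…,v̂ᵢ,…,v_n] = 0 for all tuples of n+1 nonzero vectors. Then the antisymmetry relation holds: swapping two adjacent entries changes the sign of the symbol. -/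
/-- Let `G` be the abelian group generated by symbols
`[v₀,…,v_{n-1}]` (tuples of nonzero vectors of an `n`-dimensional vector space
`V`) subject to relation (c): the symbol vanishes on linearly dependent tuples,
and relation (d): the alternating sum of the facets of any `(n+1)`-tuple of
nonzero vectors vanishes. Then antisymmetry holds: swapping two adjacent
entries changes the sign of the symbol. Formally, for any subgroup `R` of
relations of the free abelian group containing the relations (c) and (d), the
element `[…,v_{i+1},v_i,…] + […,v_i,v_{i+1},…]` lies in `R`. -/
theorem modular_symbol_antisymmetry {K V : Type*} [Field K] [AddCommGroup V]
    [Module K V] {n : ℕ} (hn : 2 ≤ n) (hdim : Module.finrank K V = n)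
    (R : AddSubgroup (FreeAbelianGroup (Fin n → V)))
    (hc : ∀ v : Fin n → V, ¬ LinearIndependent K v → FreeAbelianGroup.of v ∈ R)
    (hd : ∀ w : Fin (n + 1) → V, (∀ i, w i ≠ 0) →
      (∑ i : Fin (n + 1), (-1 : ℤ) ^ (i : ℕ) •
        FreeAbelianGroup.of (w ∘ i.succAbove)) ∈ R)
    (v : Fin n → V) (hv : ∀ i, v i ≠ 0) (i : Fin n) (hi : (i : ℕ) + 1 < n) :
    FreeAbelianGroup.of (v ∘ Equiv.swap i ⟨(i : ℕ) + 1, hi⟩) +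
      FreeAbelianGroup.of v ∈ R := by
  classical
  set m := (i : ℕ) with hm
  have him : m < n := i.isLt
  have hFb : ∀ k : Fin (n+1),
      (if (k:ℕ) < m then (k:ℕ) else if (k:ℕ) = m then m+1 else if (k:ℕ) = m+1 then m
        else if (k:ℕ) = m+2 then m+1 else (k:ℕ)-1) < n := by
    intro k
    have hk := k.isLt
    split_ifs <;> omega
  set F : Fin (n+1) → Fin n := fun k => ⟨_, hFb k⟩ with hF
  set w : Fin (n+1) → V := v ∘ F with hw
  have hwne : ∀ k, w k ≠ 0 := fun k => hv _
  set j : Fin n := ⟨m+1, hi⟩ with hj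
  set pi : Fin (n+1) := ⟨m, by omega⟩ with hpi
  set pk : Fin (n+1) := ⟨m+2, by omega⟩ with hpk
  have hjv : (j : ℕ) = m + 1 := rfl
  have hpiv : (pi : ℕ) = m := rfl
  have hpkv : (pk : ℕ) = m + 2 := rfl
  have hiv : (i : ℕ) = m := rfl
  have hcoe : ∀ (p : Fin (n+1)) (k : Fin n),
      ((p.succAbove k : Fin (n+1)) : ℕ) = if (k:ℕ) < (p:ℕ) then (k:ℕ) else (k:ℕ)+1 := by
    intro p k
    rw [Fin.succAbove]; split_ifs with h1 h2 h3 <;> simp_all [Fin.lt_def]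
  have hFval : ∀ k : Fin (n+1), (F k : ℕ) =
      (if (k:ℕ) < m then (k:ℕ) else if (k:ℕ) = m then m+1 else if (k:ℕ) = m+1 then m
        else if (k:ℕ) = m+2 then m+1 else (k:ℕ)-1) := fun k => rfl
  -- two key facet identities
  have hA : w ∘ pi.succAbove = v := by
    funext k
    show v (F (pi.succAbove k)) = v k
    congr 1
    apply Fin.ext
    rw [hFval, hcoe, hpiv]
    have hk := k.isLt
    split_ifs <;> omega
  have hB : w ∘ pk.succAbove = v ∘ Equiv.swap i j := by
    funext k
    show v (F (pk.succAbove k)) = v (Equiv.swap i j k)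
    congr 1
    apply Fin.ext
    have hk := k.isLt
    rcases eq_or_ne k i with rfl | hki
    · rw [Equiv.swap_apply_left, hFval, hcoe, hpkv, hjv]
      split_ifs <;> omega
    · rcases eq_or_ne k j with hkj | hkj
      · rw [hkj, Equiv.swap_apply_right, hFval, hcoe, hpkv, hjv, hiv]
        split_ifs <;> omega
      · rw [Equiv.swap_apply_of_ne_of_ne hki hkj, hFval, hcoe, hpkv]
        have h1 : (k:ℕ) ≠ m := fun h => hki (Fin.ext h)
        have h2 : (k:ℕ) ≠ m+1 := fun h => hkj (Fin.ext h)
        split_ifs <;> omega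
  -- other facets are degenerate
  have hdup : ∀ p : Fin (n+1), p ≠ pi → p ≠ pk →
      ¬ LinearIndependent K (w ∘ p.succAbove) := by
    intro p hp1 hp2 hlin
    obtain ⟨a, ha⟩ := Fin.exists_succAbove_eq hp1.symm
    obtain ⟨b, hb⟩ := Fin.exists_succAbove_eq hp2.symm
    have hab : a ≠ b := by
      intro h; rw [h, hb] at ha
      have := congrArg Fin.val ha
      rw [hpiv, hpkv] at this
      omega
    apply hab
    apply hlin.injective
    show w (p.succAbove a) = w (p.succAbove b)
    rw [ha, hb]
    show v (F pi) = v (F pk)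
    congr 1
    apply Fin.ext
    rw [hFval, hFval, hpiv, hpkv]
    split_ifs <;> omega
  set t : Fin (n+1) → FreeAbelianGroup (Fin n → V) :=
    fun p => (-1 : ℤ) ^ (p : ℕ) • FreeAbelianGroup.of (w ∘ p.succAbove) with ht
  have hS : (∑ p : Fin (n+1), t p) ∈ R := hd w hwne
  have hpik : pi ≠ pk := fun h => by
    have := congrArg Fin.val h; rw [hpiv, hpkv] at this; omega
  have hrest : (∑ p ∈ Finset.univ \ {pi, pk}, t p) ∈ R := by
    apply AddSubgroup.sum_mem
    intro p hp
    simp only [Finset.mem_sdiff, Finset.mem_insert, Finset.mem_singleton] at hp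
    exact AddSubgroup.zsmul_mem R (hc _ (hdup p (fun h => hp.2 (Or.inl h))
      (fun h => hp.2 (Or.inr h)))) _
  have hkey : t pi + t pk ∈ R := by
    have hsd := Finset.sum_sdiff (f := t) (Finset.subset_univ ({pi, pk} : Finset (Fin (n+1))))
    rw [Finset.sum_pair hpik] at hsd
    have h2 : t pi + t pk = (∑ p : Fin (n+1), t p) - ∑ p ∈ Finset.univ \ {pi, pk}, t p := by
      rw [← hsd]; abel
    rw [h2]
    exact sub_mem hS hrest
  have hval : t pi + t pk = (-1 : ℤ) ^ m •
      (FreeAbelianGroup.of (v ∘ Equiv.swap i j) + FreeAbelianGroup.of v) := by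
    rw [ht]
    simp only [hA, hB, hpiv, hpkv]
    have hp2 : (-1 : ℤ) ^ (m+2) = (-1 : ℤ) ^ m := by ring
    rw [hp2, smul_add]
    abel
  rw [hval] at hkey
  have hfin := AddSubgroup.zsmul_mem R hkey ((-1 : ℤ) ^ m)
  rw [smul_smul, ← pow_add, ← two_mul, pow_mul, neg_one_sq, one_pow, one_smul] at hfin
  exact hfin
end

section
/- With the same presentation as above (relations (c) and (d)), the homogeneity relation holds: [a·v₀, v₁,…,v_{n-1}] = [v₀, v₁,…,v_{n-1}] for every nonzero scalar a. -/
/-- With the presentation of the Steinberg module by symbols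
`[v₀,…,v_{n-1}]` (tuples of nonzero vectors) modulo relation (c) (the symbol
vanishes on linearly dependent tuples) and relation (d) (the alternating sum of
the facets of any `(n+1)`-tuple of nonzero vectors vanishes), the homogeneity
relation holds: `[a·v₀, v₁,…,v_{n-1}] = [v₀, v₁,…,v_{n-1}]` for every nonzero
scalar `a`. Formally, for any subgroup `R` of relations containing (c) and (d),
`[a·v₀,v₁,…] − [v₀,v₁,…]` lies in `R`. -/
theorem modular_symbol_homogeneous {K V : Type*} [Field K] [AddCommGroup V]
    [Module K V] {n : ℕ} (hn : 2 ≤ n) (hdim : Module.finrank K V = n)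
    (R : AddSubgroup (FreeAbelianGroup (Fin n → V)))
    (hc : ∀ v : Fin n → V, ¬ LinearIndependent K v → FreeAbelianGroup.of v ∈ R)
    (hd : ∀ w : Fin (n + 1) → V, (∀ i, w i ≠ 0) →
      (∑ i : Fin (n + 1), (-1 : ℤ) ^ (i : ℕ) •
        FreeAbelianGroup.of (w ∘ i.succAbove)) ∈ R)
    (v : Fin n → V) (hv : ∀ i, v i ≠ 0) (a : K) (ha : a ≠ 0) :
    FreeAbelianGroup.of (Function.update v ⟨0, by omega⟩ (a • v ⟨0, by omega⟩)) -
      FreeAbelianGroup.of v ∈ R := by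
  haveI : NeZero n := ⟨by omega⟩
  have hz : (⟨0, by omega⟩ : Fin n) = 0 := by ext; simp
  rw [hz]
  have hval1n : ((1 : Fin n) : ℕ) = 1 := by
    simp [Fin.val_one', Nat.mod_eq_of_lt (show 1 < n by omega)]
  have hval1 : ((1 : Fin (n + 1)) : ℕ) = 1 := by
    simp [Fin.val_one', Nat.mod_eq_of_lt (show 1 < n + 1 by omega)]
  set u : Fin n → V := Function.update v 0 (a • v 0) with hu
  set w : Fin (n + 1) → V := Fin.cons (v 0) u with hw
  have hws : ∀ j : Fin n, w j.succ = u j := fun j => Fin.cons_succ _ _ _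
  have hw0 : w 0 = v 0 := Fin.cons_zero _ _
  have hw1 : w 1 = a • v 0 := by
    have h1s : (1 : Fin (n + 1)) = Fin.succ 0 := by ext; rw [hval1, Fin.val_succ, Fin.val_zero]
    rw [h1s, hws, hu, Function.update_self]
  have hwne : ∀ i, w i ≠ 0 := by
    intro i
    refine Fin.cases ?_ ?_ i
    · rw [hw0]; exact hv 0
    · intro j
      rw [hws]
      rcases eq_or_ne j 0 with rfl | h
      · rw [hu, Function.update_self]; exact smul_ne_zero ha (hv 0)
      · rw [hu, Function.update_of_ne h]; exact hv j
  have hS := hd w hwne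
  -- facets 0 and 1
  have hf0 : w ∘ (0 : Fin (n+1)).succAbove = u := by
    funext j
    rw [Function.comp_apply, Fin.succAbove_zero, hws]
  have hf1 : w ∘ (1 : Fin (n+1)).succAbove = v := by
    funext j
    rcases eq_or_ne j 0 with rfl | h
    · have hsa : (1 : Fin (n+1)).succAbove 0 = 0 := by
        rw [Fin.succAbove_of_castSucc_lt]
        · rfl
        · rw [Fin.lt_iff_val_lt_val, hval1]
          simp
      rw [Function.comp_apply, hsa, hw0]
    · have hsa : (1 : Fin (n+1)).succAbove j = j.succ := by
        rw [Fin.succAbove_of_le_castSucc]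
        rw [Fin.le_iff_val_le_val, hval1, Fin.coe_castSucc]
        exact Nat.one_le_iff_ne_zero.mpr (fun hh => h (Fin.ext hh))
      rw [Function.comp_apply, hsa, hws, hu, Function.update_of_ne h]
  set f : Fin (n+1) → FreeAbelianGroup (Fin n → V) :=
    fun i => (-1 : ℤ) ^ (i : ℕ) • FreeAbelianGroup.of (w ∘ i.succAbove) with hf
  -- the remaining facets are linearly dependent
  have hdep : ∀ i : Fin (n+1), i ≠ 0 → i ≠ 1 → ¬ LinearIndependent K (w ∘ i.succAbove) := by
    intro i hi0 hi1 li
    have hiv0 : (0 : ℕ) < (i : ℕ) := Nat.pos_of_ne_zero (fun hh => hi0 (Fin.ext hh))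
    have hiv1 : (1 : ℕ) < (i : ℕ) := by
      rcases Nat.lt_or_ge 1 (i : ℕ) with h | h
      · exact h
      · exact absurd (Fin.ext (by omega : (i : ℕ) = ((1 : Fin (n+1)) : ℕ))) hi1
    have hsa0 : i.succAbove 0 = 0 := by
      rw [Fin.succAbove_of_castSucc_lt]
      · rfl
      · rw [Fin.lt_iff_val_lt_val]
        simpa using hiv0
    have hsa1 : i.succAbove (1 : Fin n) = 1 := by
      rw [Fin.succAbove_of_castSucc_lt]
      · ext
        rw [Fin.coe_castSucc, hval1n, hval1]
      · rw [Fin.lt_iff_val_lt_val, Fin.coe_castSucc, hval1n]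
        exact hiv1
    have hg0 : w (i.succAbove 0) = v 0 := by rw [hsa0, hw0]
    have hg1 : w (i.succAbove 1) = a • v 0 := by rw [hsa1, hw1]
    have h01 : (0 : Fin n) ≠ 1 := by
      apply Fin.ne_of_val_ne
      rw [Fin.val_zero, hval1n]
      exact zero_ne_one
    have hinj : Function.Injective (![(0 : Fin n), 1]) := by
      intro x y hxy
      fin_cases x <;> fin_cases y <;> simp_all
    have li2 := li.comp ![(0 : Fin n), 1] hinj
    have heq : (w ∘ i.succAbove) ∘ ![(0 : Fin n), 1] = ![v 0, a • v 0] := by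
      funext j
      fin_cases j
      · simpa using hg0
      · simpa using hg1
    rw [heq] at li2
    exact ha (LinearIndependent.pair_iff.mp li2 a (-1)
      (by rw [neg_one_smul]; abel)).1
  have h1mem : (1 : Fin (n+1)) ∈ (Finset.univ.erase (0 : Fin (n+1))) := by
    refine Finset.mem_erase.mpr ⟨?_, Finset.mem_univ _⟩
    apply Fin.ne_of_val_ne
    rw [hval1, Fin.val_zero]
    exact one_ne_zero
  have hsum : ∑ i : Fin (n+1), f i
      = f 0 + (f 1 + ∑ i ∈ ((Finset.univ.erase 0).erase 1), f i) := by
    rw [Finset.add_sum_erase _ f h1mem, Finset.add_sum_erase _ f (Finset.mem_univ 0)]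
  have hf0v : f 0 = FreeAbelianGroup.of u := by
    calc f 0 = (-1 : ℤ) ^ (((0 : Fin (n+1))) : ℕ) •
        FreeAbelianGroup.of (w ∘ (0 : Fin (n+1)).succAbove) := rfl
      _ = FreeAbelianGroup.of u := by rw [hf0, Fin.val_zero, pow_zero, one_smul]
  have hf1v : f 1 = - FreeAbelianGroup.of v := by
    calc f 1 = (-1 : ℤ) ^ (((1 : Fin (n+1))) : ℕ) •
        FreeAbelianGroup.of (w ∘ (1 : Fin (n+1)).succAbove) := rfl
      _ = - FreeAbelianGroup.of v := by rw [hf1, hval1, pow_one, neg_one_zsmul]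
  have hrest : (∑ i ∈ ((Finset.univ.erase (0 : Fin (n+1))).erase 1), f i) ∈ R := by
    refine AddSubgroup.sum_mem R fun i hi => ?_
    simp only [Finset.mem_erase] at hi
    exact AddSubgroup.zsmul_mem R (hc _ (hdep i hi.2.1 hi.1)) _
  have key : FreeAbelianGroup.of u - FreeAbelianGroup.of v
      = (∑ i : Fin (n+1), f i) -
        ∑ i ∈ ((Finset.univ.erase (0 : Fin (n+1))).erase 1), f i := by
    rw [hsum, hf0v, hf1v]
    abel
  rw [key]
  exact AddSubgroup.sub_mem R hS hrest
end
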